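/- For any discrete random variables Z and H₁,…,H_k on finite spaces, J(Z; (H₁,…,H_k)) ≤ Σ_{t=1}^{k} J(Z; H_t | (H₁,…,H_{t−1})), where the t=1 term is the unconditional variational information J(Z; H₁). -/

import Mathlib

open scoped Classical BigOperators

/-- `μ` is a probability mass function on a finite type. -/
def IsPMF {Ω : Type*} [Fintype Ω] (μ : Ω → ℝ) : Prop :=
  (∀ ω, 0 ≤ μ ω) ∧ ∑ ω, μ ω = 1

/-- Probability that the random variable `X` takes the value `a` under `μ`. -/
noncomputable def pr {Ω α : Type*} [Fintype Ω] (μ : Ω → ℝ) (X : Ω → α) (a : α) : ℝ :=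
  ∑ ω, if X ω = a then μ ω else 0

/-- Variational information `J(X;Y)`: total variation distance between the joint
law of `(X,Y)` and the product of the marginal laws. -/
noncomputable def vinfo {Ω α β : Type*} [Fintype Ω] [Fintype α] [Fintype β]
    (μ : Ω → ℝ) (X : Ω → α) (Y : Ω → β) : ℝ :=
  (1/2) * ∑ a, ∑ b, |pr μ (fun ω => (X ω, Y ω)) (a, b) - pr μ X a * pr μ Y b|

/-- Conditional variational information `J(X;Y|W)`:
`E_W[d_TV(P(X,Y|W), P(X|W)⊗P(Y|W))]`. -/
noncomputable def condVinfo {Ω α β γ : Type*} [Fintype Ω] [Fintype α] [Fintype β] [Fintype γ]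
    (μ : Ω → ℝ) (X : Ω → α) (Y : Ω → β) (W : Ω → γ) : ℝ :=
  (1/2) * ∑ c, ∑ a, ∑ b,
    |pr μ (fun ω => (X ω, Y ω, W ω)) (a, b, c) -
      pr μ (fun ω => (X ω, W ω)) (a, c) * pr μ (fun ω => (Y ω, W ω)) (b, c) / pr μ W c|

section helpers
variable {Ω α β γ : Type*} [Fintype Ω] {μ : Ω → ℝ}

lemma pr_nonneg (h0 : ∀ ω, 0 ≤ μ ω) (X : Ω → α) (a : α) : 0 ≤ pr μ X a :=
  Finset.sum_nonneg fun ω _ => by split_ifs; exacts [h0 ω, le_rfl]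

lemma sum_pr_pair [Fintype β] (Y : Ω → β) (W : Ω → γ) (c : γ) :
    ∑ b, pr μ (fun ω => (Y ω, W ω)) (b, c) = pr μ W c := by
  unfold pr
  rw [Finset.sum_comm]
  refine Finset.sum_congr rfl fun ω _ => ?_
  rcases eq_or_ne (W ω) c with h | h
  · simp [Prod.ext_iff, h]
  · simp [Prod.ext_iff, h]

lemma pr_pair_le [Fintype β] (h0 : ∀ ω, 0 ≤ μ ω) (Y : Ω → β) (W : Ω → γ) (b : β) (c : γ) :
    pr μ (fun ω => (Y ω, W ω)) (b, c) ≤ pr μ W c := by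
  rw [← sum_pr_pair Y W c]
  exact Finset.single_le_sum (f := fun b => pr μ (fun ω => (Y ω, W ω)) (b, c)) (fun b' _ => pr_nonneg h0 _ _) (Finset.mem_univ b)

lemma pr_comp {β' : Type*} (f : β → β') (hf : Function.Injective f) (Y : Ω → β) (b : β) :
    pr μ (fun ω => f (Y ω)) (f b) = pr μ Y b := by
  unfold pr; exact Finset.sum_congr rfl fun ω _ => by simp [hf.eq_iff]

lemma pr_comp_pair {β' : Type*} (f : β → β') (hf : Function.Injective f)
    (X : Ω → α) (Y : Ω → β) (a : α) (b : β) :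
    pr μ (fun ω => (X ω, f (Y ω))) (a, f b) = pr μ (fun ω => (X ω, Y ω)) (a, b) := by
  unfold pr; exact Finset.sum_congr rfl fun ω _ => by simp [Prod.ext_iff, hf.eq_iff]

lemma pr_comp_notin {β' : Type*} {f : β → β'} {b' : β'} (hb' : b' ∉ Set.range f) (Y : Ω → β) :
    pr μ (fun ω => f (Y ω)) b' = 0 := by
  unfold pr
  refine Finset.sum_eq_zero fun ω _ => ?_
  rw [if_neg]; exact fun h => hb' ⟨Y ω, h⟩

lemma pr_comp_pair_notin {β' : Type*} {f : β → β'} {b' : β'} (hb' : b' ∉ Set.range f)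
    (X : Ω → α) (Y : Ω → β) (a : α) :
    pr μ (fun ω => (X ω, f (Y ω))) (a, b') = 0 := by
  unfold pr
  refine Finset.sum_eq_zero fun ω _ => ?_
  rw [if_neg]
  intro h
  exact hb' ⟨Y ω, (Prod.ext_iff.1 h).2⟩

lemma vinfo_comp [Fintype α] [Fintype β] {β' : Type*} [Fintype β']
    (f : β → β') (hf : Function.Injective f) (X : Ω → α) (Y : Ω → β) :
    vinfo μ X (fun ω => f (Y ω)) = vinfo μ X Y := by
  unfold vinfo
  congr 1
  refine Finset.sum_congr rfl fun a _ => ?_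
  calc ∑ b' : β', |pr μ (fun ω => (X ω, f (Y ω))) (a, b') - pr μ X a * pr μ (fun ω => f (Y ω)) b'|
      = ∑ b' ∈ Finset.univ.image f,
          |pr μ (fun ω => (X ω, f (Y ω))) (a, b') - pr μ X a * pr μ (fun ω => f (Y ω)) b'| := by
        refine (Finset.sum_subset (Finset.subset_univ _) fun x _ hx => ?_).symm
        have hr : x ∉ Set.range f := by
          intro ⟨b, hb⟩; exact hx (Finset.mem_image.2 ⟨b, Finset.mem_univ b, hb⟩)
        rw [pr_comp_pair_notin hr, pr_comp_notin hr]; simp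
    _ = ∑ b : β, |pr μ (fun ω => (X ω, f (Y ω))) (a, f b) - pr μ X a * pr μ (fun ω => f (Y ω)) (f b)| :=
        Finset.sum_image (fun b _ b' _ h => hf h)
    _ = ∑ b : β, |pr μ (fun ω => (X ω, Y ω)) (a, b) - pr μ X a * pr μ Y b| := by
        refine Finset.sum_congr rfl fun b _ => ?_
        rw [pr_comp_pair f hf, pr_comp f hf]

lemma vinfo_subsingleton [Fintype α] [Fintype β] [Subsingleton β]
    (hμ : IsPMF μ) (X : Ω → α) (Y : Ω → β) : vinfo μ X Y = 0 := by
  unfold vinfo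
  rw [mul_eq_zero]; right
  refine Finset.sum_eq_zero fun a _ => Finset.sum_eq_zero fun b _ => ?_
  have hY : ∀ ω, Y ω = b := fun ω => Subsingleton.elim _ _
  have h2 : pr μ Y b = 1 := by
    unfold pr; simp only [hY, if_true]; exact hμ.2
  have h3 : pr μ (fun ω => (X ω, Y ω)) (a, b) = pr μ X a := by
    unfold pr
    refine Finset.sum_congr rfl fun ω _ => ?_
    simp [Prod.ext_iff, hY]
  rw [h2, h3]; simp

end helpers

section step
variable {Ω 𝒵 β γ : Type*} [Fintype Ω] [Fintype 𝒵] [Fintype β] [Fintype γ] {μ : Ω → ℝ}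

lemma vinfo_step (hμ : IsPMF μ) (Z : Ω → 𝒵) (Y : Ω → β) (W : Ω → γ) :
    vinfo μ Z (fun ω => (Y ω, W ω)) ≤ vinfo μ Z W + condVinfo μ Z Y W := by
  obtain ⟨h0, -⟩ := hμ
  unfold vinfo condVinfo
  rw [← mul_add]
  refine mul_le_mul_of_nonneg_left ?_ (by norm_num)
  have key : ∀ (a : 𝒵) (c : γ),
      ∑ b, |pr μ (fun ω => (Z ω, W ω)) (a, c) * pr μ (fun ω => (Y ω, W ω)) (b, c) / pr μ W c
            - pr μ Z a * pr μ (fun ω => (Y ω, W ω)) (b, c)|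
      = |pr μ (fun ω => (Z ω, W ω)) (a, c) - pr μ Z a * pr μ W c| := by
    intro a c
    rcases (pr_nonneg h0 W c).eq_or_lt with h | h
    · have hWc : pr μ W c = 0 := h.symm
      have hb : ∀ b, pr μ (fun ω => (Y ω, W ω)) (b, c) = 0 := fun b =>
        le_antisymm ((pr_pair_le h0 Y W b c).trans_eq hWc) (pr_nonneg h0 _ _)
      have hZW : pr μ (fun ω => (Z ω, W ω)) (a, c) = 0 :=
        le_antisymm ((pr_pair_le h0 Z W a c).trans_eq hWc) (pr_nonneg h0 _ _)
      simp [hb, hZW, hWc]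
    · have hne : pr μ W c ≠ 0 := ne_of_gt h
      have hterm : ∀ b, |pr μ (fun ω => (Z ω, W ω)) (a, c) * pr μ (fun ω => (Y ω, W ω)) (b, c) / pr μ W c
            - pr μ Z a * pr μ (fun ω => (Y ω, W ω)) (b, c)|
          = pr μ (fun ω => (Y ω, W ω)) (b, c) *
              (|pr μ (fun ω => (Z ω, W ω)) (a, c) - pr μ Z a * pr μ W c| / pr μ W c) := by
        intro b
        have : pr μ (fun ω => (Z ω, W ω)) (a, c) * pr μ (fun ω => (Y ω, W ω)) (b, c) / pr μ W c
            - pr μ Z a * pr μ (fun ω => (Y ω, W ω)) (b, c)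
            = pr μ (fun ω => (Y ω, W ω)) (b, c) *
              ((pr μ (fun ω => (Z ω, W ω)) (a, c) - pr μ Z a * pr μ W c) / pr μ W c) := by
          field_simp
        rw [this, abs_mul, abs_of_nonneg (pr_nonneg h0 _ _), abs_div, abs_of_pos h]
      rw [Finset.sum_congr rfl fun b _ => hterm b, ← Finset.sum_mul, sum_pr_pair Y W c]
      field_simp
  calc ∑ a, ∑ p : β × γ, |pr μ (fun ω => (Z ω, Y ω, W ω)) (a, p)
          - pr μ Z a * pr μ (fun ω => (Y ω, W ω)) p|
      = ∑ a, ∑ b, ∑ c, |pr μ (fun ω => (Z ω, Y ω, W ω)) (a, b, c)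
          - pr μ Z a * pr μ (fun ω => (Y ω, W ω)) (b, c)| := by
        refine Finset.sum_congr rfl fun a _ => ?_
        rw [Fintype.sum_prod_type]
    _ ≤ ∑ a, ∑ b, ∑ c,
          (|pr μ (fun ω => (Z ω, Y ω, W ω)) (a, b, c)
            - pr μ (fun ω => (Z ω, W ω)) (a, c) * pr μ (fun ω => (Y ω, W ω)) (b, c) / pr μ W c|
          + |pr μ (fun ω => (Z ω, W ω)) (a, c) * pr μ (fun ω => (Y ω, W ω)) (b, c) / pr μ W c
            - pr μ Z a * pr μ (fun ω => (Y ω, W ω)) (b, c)|) := by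
        refine Finset.sum_le_sum fun a _ => Finset.sum_le_sum fun b _ => Finset.sum_le_sum fun c _ => ?_
        exact abs_sub_le _ _ _
    _ = (∑ a, ∑ b, ∑ c, |pr μ (fun ω => (Z ω, W ω)) (a, c) * pr μ (fun ω => (Y ω, W ω)) (b, c) / pr μ W c
            - pr μ Z a * pr μ (fun ω => (Y ω, W ω)) (b, c)|)
        + ∑ a, ∑ b, ∑ c, |pr μ (fun ω => (Z ω, Y ω, W ω)) (a, b, c)
            - pr μ (fun ω => (Z ω, W ω)) (a, c) * pr μ (fun ω => (Y ω, W ω)) (b, c) / pr μ W c| := by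
        rw [← Finset.sum_add_distrib]
        refine Finset.sum_congr rfl fun a _ => ?_
        rw [← Finset.sum_add_distrib]
        refine Finset.sum_congr rfl fun b _ => ?_
        rw [← Finset.sum_add_distrib]
        refine Finset.sum_congr rfl fun c _ => ?_
        ring
    _ = (∑ a, ∑ c, |pr μ (fun ω => (Z ω, W ω)) (a, c) - pr μ Z a * pr μ W c|)
        + ∑ c, ∑ a, ∑ b, |pr μ (fun ω => (Z ω, Y ω, W ω)) (a, b, c)
            - pr μ (fun ω => (Z ω, W ω)) (a, c) * pr μ (fun ω => (Y ω, W ω)) (b, c) / pr μ W c| := by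
        congr 1
        · refine Finset.sum_congr rfl fun a _ => ?_
          rw [Finset.sum_comm]
          exact Finset.sum_congr rfl fun c _ => key a c
        · rw [show (∑ a : 𝒵, ∑ b : β, ∑ c : γ, |pr μ (fun ω => (Z ω, Y ω, W ω)) (a, b, c)
            - pr μ (fun ω => (Z ω, W ω)) (a, c) * pr μ (fun ω => (Y ω, W ω)) (b, c) / pr μ W c|)
            = ∑ a : 𝒵, ∑ c : γ, ∑ b : β, |pr μ (fun ω => (Z ω, Y ω, W ω)) (a, b, c)
            - pr μ (fun ω => (Z ω, W ω)) (a, c) * pr μ (fun ω => (Y ω, W ω)) (b, c) / pr μ W c|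
            from Finset.sum_congr rfl fun a _ => Finset.sum_comm]
          exact Finset.sum_comm

end step

lemma chain_aux {Ω 𝒵 : Type*} [Fintype Ω] [Fintype 𝒵] {k : ℕ}
    (𝓗 : Fin k → Type) [∀ i, Fintype (𝓗 i)]
    (μ : Ω → ℝ) (hμ : IsPMF μ) (Z : Ω → 𝒵) (H : ∀ i, Ω → 𝓗 i) :
    ∀ n, (hn : n ≤ k) →
      vinfo μ Z (fun ω => fun i : Fin n => H (Fin.castLE hn i) ω) ≤
        ∑ t : Fin n, condVinfo μ Z (H (Fin.castLE hn t))
          (fun ω => fun i : Fin t.val => H (Fin.castLE (t.isLt.le.trans hn) i) ω) := by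
  intro n
  induction n with
  | zero =>
    intro hn
    rw [vinfo_subsingleton hμ]
    simp
  | succ n ih =>
    intro hn
    have hn' : n ≤ k := Nat.le_of_succ_le hn
    set W : Ω → (∀ i : Fin n, 𝓗 (Fin.castLE hn' i)) :=
      fun ω i => H (Fin.castLE hn' i) ω with hW
    set Y : Ω → 𝓗 (Fin.castLE hn (Fin.last n)) := fun ω => H (Fin.castLE hn (Fin.last n)) ω with hY
    have hf : Function.Injective
        (fun g : (∀ i : Fin (n+1), 𝓗 (Fin.castLE hn i)) =>
          ((g (Fin.last n), fun i : Fin n => g i.castSucc) :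
            𝓗 (Fin.castLE hn (Fin.last n)) × (∀ i : Fin n, 𝓗 (Fin.castLE hn' i)))) := by
      intro g g' h
      rw [Prod.ext_iff] at h
      funext i
      refine Fin.lastCases ?_ ?_ i
      · exact h.1
      · exact fun j => congrFun h.2 j
    have heq : vinfo μ Z (fun ω => fun i : Fin (n+1) => H (Fin.castLE hn i) ω)
        = vinfo μ Z (fun ω => (Y ω, W ω)) := by
      exact (vinfo_comp _ hf Z (fun ω => fun i : Fin (n+1) => H (Fin.castLE hn i) ω)).symm
    rw [heq]
    calc vinfo μ Z (fun ω => (Y ω, W ω))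
        ≤ vinfo μ Z W + condVinfo μ Z Y W := vinfo_step hμ Z Y W
      _ ≤ (∑ t : Fin n, condVinfo μ Z (H (Fin.castLE hn' t))
            (fun ω => fun i : Fin t.val => H (Fin.castLE (t.isLt.le.trans hn') i) ω))
          + condVinfo μ Z Y W := add_le_add (ih hn') le_rfl
      _ = ∑ t : Fin (n+1), condVinfo μ Z (H (Fin.castLE hn t))
            (fun ω => fun i : Fin t.val => H (Fin.castLE (t.isLt.le.trans hn) i) ω) := by
          rw [Fin.sum_univ_castSucc]; rfl


/-- Chain rule for variational information:
`J(Z;(H₁,…,H_k)) ≤ Σ_t J(Z;H_t | (H₁,…,H_{t-1}))`, where the `t = 0` (first) term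
conditions on the empty prefix, i.e. it is the unconditional variational information. -/
theorem chain_rule {Ω 𝒵 : Type*} [Fintype Ω] [Fintype 𝒵] {k : ℕ}
    (𝓗 : Fin k → Type) [∀ i, Fintype (𝓗 i)]
    (μ : Ω → ℝ) (hμ : IsPMF μ) (Z : Ω → 𝒵) (H : ∀ i, Ω → 𝓗 i) :
    vinfo μ Z (fun ω => fun i => H i ω) ≤
      ∑ t : Fin k, condVinfo μ Z (H t)
        (fun ω => fun i : Fin t.val => H (Fin.castLE t.isLt.le i) ω) := by
  exact chain_aux 𝓗 μ hμ Z H k le_rfl
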